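/- For every θ ∈ ℂ: 2^{N−1}·∏_{θ'∈θ_p} sin((θ−θ')/2) = (−1)^{N−1}·sin(Nθ/2) and 2^{N−1}·∏_{θ'∈θ_a} sin((θ−θ')/2) = (−1)^N·cos(Nθ/2). -/

import Mathlib

open Finset

noncomputable section

/-- Antiperiodic momenta: θ_a = {(2j−1)π/N : j = 1,…,N}. -/
def thetaA (N : ℕ) (j : Fin N) : ℝ := (2 * (j : ℝ) + 1) * Real.pi / N

/-- Periodic momenta: θ_p = {2(j−1)π/N : j = 1,…,N}. -/
def thetaP (N : ℕ) (j : Fin N) : ℝ := (2 * (j : ℝ)) * Real.pi / N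

open Polynomial in
lemma prod_roots (N : ℕ) (hN : 0 < N) (z : ℂ) :
    ∏ j ∈ Finset.range N, (z - Complex.exp (2 * Real.pi * Complex.I / N) ^ j) = z ^ N - 1 := by
  have hζ : IsPrimitiveRoot (Complex.exp (2 * Real.pi * Complex.I / N)) N :=
    Complex.isPrimitiveRoot_exp N hN.ne'
  set ζ := Complex.exp (2 * Real.pi * Complex.I / N)
  have himg : nthRootsFinset N (1 : ℂ) = (Finset.range N).image (fun j => ζ ^ j) := by
    symm
    apply Finset.eq_of_subset_of_card_le
    · intro x hx
      simp only [Finset.mem_image, Finset.mem_range] at hx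
      obtain ⟨j, _, rfl⟩ := hx
      rw [Polynomial.mem_nthRootsFinset hN, ← pow_mul, mul_comm, pow_mul, hζ.pow_eq_one, one_pow]
    · rw [hζ.card_nthRootsFinset, Finset.card_image_of_injOn, Finset.card_range]
      intro i hi j hj hij
      exact hζ.injOn_pow (by simpa using hi) (by simpa using hj) hij
  have := congrArg (Polynomial.eval z) (X_pow_sub_one_eq_prod hN hζ)
  simp only [eval_sub, eval_pow, eval_X, eval_one, eval_prod, eval_sub, eval_C] at this
  rw [this, himg, Finset.prod_image]
  intro i hi j hj hij
  exact hζ.injOn_pow (by simpa using hi) (by simpa using hj) hij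

lemma prod_roots_anti (N : ℕ) (hN : 0 < N) (z : ℂ) :
    ∏ j ∈ Finset.range N, (z - Complex.exp (Real.pi * Complex.I / N) *
      Complex.exp (2 * Real.pi * Complex.I / N) ^ j) = z ^ N + 1 := by
  have hc0 : Complex.exp (Real.pi * Complex.I / N) ≠ 0 := Complex.exp_ne_zero _
  have hcN : Complex.exp (Real.pi * Complex.I / N) ^ N = -1 := by
    rw [← Complex.exp_nat_mul]
    have hNz : (N : ℂ) ≠ 0 := Nat.cast_ne_zero.2 hN.ne'
    have : (N : ℂ) * (Real.pi * Complex.I / N) = Real.pi * Complex.I := by field_simp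
    rw [this, Complex.exp_pi_mul_I]
  have hprod := prod_roots N hN (z * (Complex.exp (Real.pi * Complex.I / N))⁻¹)
  have step : ∀ j ∈ Finset.range N,
      z - Complex.exp (Real.pi * Complex.I / N) * Complex.exp (2 * Real.pi * Complex.I / N) ^ j =
        Complex.exp (Real.pi * Complex.I / N) *
          (z * (Complex.exp (Real.pi * Complex.I / N))⁻¹ -
            Complex.exp (2 * Real.pi * Complex.I / N) ^ j) := by
    intro j _
    field_simp
  rw [Finset.prod_congr rfl step, Finset.prod_mul_distrib, Finset.prod_const, Finset.card_range,
    hprod, hcN, mul_pow, inv_pow, hcN]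
  ring_nf

lemma sin_half_sub (θ φ : ℂ) :
    Complex.sin ((θ - φ) / 2) =
      -(Complex.I / 2) * Complex.exp (-(θ / 2) * Complex.I) *
        (Complex.exp (-(φ / 2) * Complex.I) *
          (Complex.exp (θ * Complex.I) - Complex.exp (φ * Complex.I))) := by
  have e1 : Complex.exp (-(θ / 2) * Complex.I) * (Complex.exp (-(φ / 2) * Complex.I) *
      Complex.exp (θ * Complex.I)) = Complex.exp ((θ - φ) / 2 * Complex.I) := by
    rw [← Complex.exp_add, ← Complex.exp_add]; ring_nf
  have e2 : Complex.exp (-(θ / 2) * Complex.I) * (Complex.exp (-(φ / 2) * Complex.I) *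
      Complex.exp (φ * Complex.I)) = Complex.exp (-((θ - φ) / 2) * Complex.I) := by
    rw [← Complex.exp_add, ← Complex.exp_add]; ring_nf
  rw [Complex.sin]
  linear_combination (Complex.I / 2) * e1 - (Complex.I / 2) * e2

lemma prod_sin_eq (N : ℕ) (θ : ℂ) (φ : Fin N → ℂ) :
    ∏ j : Fin N, Complex.sin ((θ - φ j) / 2) =
      (-(Complex.I / 2)) ^ N * Complex.exp (-(θ / 2) * Complex.I) ^ N *
        Complex.exp (-((∑ j : Fin N, φ j) / 2) * Complex.I) *
        ∏ j : Fin N, (Complex.exp (θ * Complex.I) - Complex.exp (φ j * Complex.I)) := by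
  have harg : (∑ j : Fin N, -(φ j / 2) * Complex.I) = -((∑ j : Fin N, φ j) / 2) * Complex.I := by
    rw [← Finset.sum_mul]
    congr 1
    rw [Finset.sum_div]
    exact Finset.sum_neg_distrib (s := Finset.univ) (f := fun j => φ j / 2)
  calc ∏ j : Fin N, Complex.sin ((θ - φ j) / 2)
      = ∏ j : Fin N, ((-(Complex.I / 2) * Complex.exp (-(θ / 2) * Complex.I)) *
          (Complex.exp (-(φ j / 2) * Complex.I) *
            (Complex.exp (θ * Complex.I) - Complex.exp (φ j * Complex.I)))) :=
        Finset.prod_congr rfl fun j _ => by rw [sin_half_sub]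
    _ = (∏ _j : Fin N, (-(Complex.I / 2) * Complex.exp (-(θ / 2) * Complex.I))) *
          ((∏ j : Fin N, Complex.exp (-(φ j / 2) * Complex.I)) *
            ∏ j : Fin N, (Complex.exp (θ * Complex.I) - Complex.exp (φ j * Complex.I))) := by
        simp only [Finset.prod_mul_distrib]
    _ = _ := by
        rw [Finset.prod_const, Finset.card_univ, Fintype.card_fin, ← Complex.exp_sum, harg,
          mul_pow]
        ring

lemma exp_neg_pi_div_two : Complex.exp (-((Real.pi : ℂ) / 2) * Complex.I) = -Complex.I := by
  have h : -((Real.pi : ℂ) / 2) * Complex.I = ((-(Real.pi / 2) : ℝ) : ℂ) * Complex.I := by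
    push_cast; ring
  rw [h, Complex.exp_mul_I, ← Complex.ofReal_cos, ← Complex.ofReal_sin]
  simp [Real.cos_pi_div_two, Real.sin_pi_div_two]

/-- Product formulas over the full momentum sets:
2^{N−1}·∏_{θ'∈θ_p} sin((θ−θ')/2) = (−1)^{N−1} sin(Nθ/2) and
2^{N−1}·∏_{θ'∈θ_a} sin((θ−θ')/2) = (−1)^N cos(Nθ/2). -/
theorem momentum_product_formulas (N : ℕ) (hN : 1 ≤ N) (θ : ℂ) :
    2 ^ (N - 1) * ∏ j : Fin N, Complex.sin ((θ - ((thetaP N j : ℝ) : ℂ)) / 2) =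
        (-1 : ℂ) ^ (N - 1) * Complex.sin (N * θ / 2) ∧
      2 ^ (N - 1) * ∏ j : Fin N, Complex.sin ((θ - ((thetaA N j : ℝ) : ℂ)) / 2) =
        (-1 : ℂ) ^ N * Complex.cos (N * θ / 2) := by
  obtain ⟨M, rfl⟩ : ∃ M, N = M + 1 := ⟨N - 1, (Nat.succ_pred_eq_of_pos hN).symm⟩
  clear hN
  set N := M + 1 with hNdef
  have hNpos : 0 < N := Nat.succ_pos M
  have hNz : (N : ℂ) ≠ 0 := Nat.cast_ne_zero.2 hNpos.ne'
  have hsub : N - 1 = M := by omega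
  set u : ℂ := Complex.exp ((θ / 2) * Complex.I) with hu
  have hu0 : u ≠ 0 := Complex.exp_ne_zero _
  set A : ℂ := u ^ N with hA
  have hA0 : A ≠ 0 := pow_ne_zero _ hu0
  -- basic exp facts
  have hexp_neg : Complex.exp (-(θ / 2) * Complex.I) = u⁻¹ := by
    rw [hu, ← Complex.exp_neg]; congr 1; ring
  have hexp_th : Complex.exp (θ * Complex.I) = u ^ 2 := by
    rw [hu, ← Complex.exp_nat_mul]; congr 1; push_cast; ring
  have hexpN : Complex.exp ((N : ℂ) * θ / 2 * Complex.I) = A := by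
    rw [hA, hu, ← Complex.exp_nat_mul]; congr 1; push_cast; ring
  have hexpNneg : Complex.exp (-((N : ℂ) * θ / 2) * Complex.I) = A⁻¹ := by
    rw [← hexpN, ← Complex.exp_neg]; congr 1; ring
  have huinvN : (u⁻¹) ^ N = A⁻¹ := by rw [inv_pow, hA]
  have hu2N : (u ^ 2) ^ N = A ^ 2 := by rw [hA, ← pow_mul, ← pow_mul, mul_comm]
  -- Gauss sum
  have hgauss : ∑ j : Fin N, ((j : ℕ) : ℂ) = (N : ℂ) * M / 2 := by
    rw [Fin.sum_univ_eq_sum_range (fun i => ((i : ℕ) : ℂ))]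
    have h2 := Finset.sum_range_id_mul_two N
    have h2' := congrArg (Nat.cast : ℕ → ℂ) h2
    push_cast [hsub] at h2'
    have hNc : (N : ℂ) = (M : ℂ) + 1 := by rw [hNdef]; push_cast; ring
    rw [hNc]
    linear_combination h2' / 2 + ((M : ℂ) / 2) * hNc
  -- sums of momenta
  have hsumP : ∑ j : Fin N, ((thetaP N j : ℝ) : ℂ) = (M : ℂ) * Real.pi := by
    have : ∀ j : Fin N, ((thetaP N j : ℝ) : ℂ) = ((j : ℕ) : ℂ) * (2 * Real.pi / N) := by
      intro j; simp only [thetaP]; push_cast; ring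
    rw [Finset.sum_congr rfl (fun j _ => this j), ← Finset.sum_mul, hgauss]
    field_simp
  have hsumA : ∑ j : Fin N, ((thetaA N j : ℝ) : ℂ) = (N : ℂ) * Real.pi := by
    have : ∀ j : Fin N, ((thetaA N j : ℝ) : ℂ) =
        ((j : ℕ) : ℂ) * (2 * Real.pi / N) + (Real.pi : ℂ) / N := by
      intro j; simp only [thetaA]; push_cast; ring
    rw [Finset.sum_congr rfl (fun j _ => this j), Finset.sum_add_distrib, ← Finset.sum_mul,
      hgauss, Finset.sum_const, Finset.card_univ, Fintype.card_fin]
    field_simp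
    push_cast
    ring_nf
    rw [mul_inv_cancel_right₀ hNz, hNdef]; push_cast; ring
  -- exp of minus half sums
  have hePhase : ∀ k : ℕ, Complex.exp (-(((k : ℂ) * Real.pi) / 2) * Complex.I) =
      (-Complex.I) ^ k := by
    intro k
    rw [← exp_neg_pi_div_two, ← Complex.exp_nat_mul]
    congr 1; ring
  -- root products
  have hrootP : ∏ j : Fin N, (Complex.exp (θ * Complex.I) -
      Complex.exp (((thetaP N j : ℝ) : ℂ) * Complex.I)) = A ^ 2 - 1 := by
    have hterm : ∀ j : Fin N, Complex.exp (θ * Complex.I) -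
        Complex.exp (((thetaP N j : ℝ) : ℂ) * Complex.I) =
        Complex.exp (θ * Complex.I) - Complex.exp (2 * Real.pi * Complex.I / N) ^ (j : ℕ) := by
      intro j
      congr 1
      rw [← Complex.exp_nat_mul]
      congr 1; simp only [thetaP]; push_cast; ring
    rw [Finset.prod_congr rfl (fun j _ => hterm j),
      Fin.prod_univ_eq_prod_range (fun i => Complex.exp (θ * Complex.I) -
        Complex.exp (2 * Real.pi * Complex.I / N) ^ i),
      prod_roots N hNpos, hexp_th, hu2N]
  have hrootA : ∏ j : Fin N, (Complex.exp (θ * Complex.I) -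
      Complex.exp (((thetaA N j : ℝ) : ℂ) * Complex.I)) = A ^ 2 + 1 := by
    have hterm : ∀ j : Fin N, Complex.exp (θ * Complex.I) -
        Complex.exp (((thetaA N j : ℝ) : ℂ) * Complex.I) =
        Complex.exp (θ * Complex.I) - Complex.exp (Real.pi * Complex.I / N) *
          Complex.exp (2 * Real.pi * Complex.I / N) ^ (j : ℕ) := by
      intro j
      congr 1
      rw [← Complex.exp_nat_mul, ← Complex.exp_add]
      congr 1; simp only [thetaA]; push_cast; ring
    rw [Finset.prod_congr rfl (fun j _ => hterm j),
      Fin.prod_univ_eq_prod_range (fun i => Complex.exp (θ * Complex.I) -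
        Complex.exp (Real.pi * Complex.I / N) * Complex.exp (2 * Real.pi * Complex.I / N) ^ i),
      prod_roots_anti N hNpos, hexp_th, hu2N]
  -- coefficient identity
  have e5 : (2 : ℂ) ^ M * (-(Complex.I / 2)) ^ M * (-Complex.I) ^ M = (-1 : ℂ) ^ M := by
    rw [← mul_pow, ← mul_pow]
    congr 1
    have := Complex.I_sq
    linear_combination this
  constructor
  · rw [prod_sin_eq N θ (fun j => ((thetaP N j : ℝ) : ℂ)), hsumP, hePhase M, hrootP,
      hexp_neg, huinvN, hsub, Complex.sin, hexpN, hexpNneg]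
    rw [hNdef, pow_succ]
    have hAA : A⁻¹ * A ^ 2 = A := by rw [pow_two, ← mul_assoc, inv_mul_cancel₀ hA0, one_mul]
    linear_combination (-(Complex.I / 2) * A⁻¹ * (A ^ 2 - 1)) * e5 +
      ((-1 : ℂ) ^ M * (-(Complex.I / 2))) * hAA
  · rw [prod_sin_eq N θ (fun j => ((thetaA N j : ℝ) : ℂ)), hsumA]
    rw [hePhase N, hrootA, hexp_neg, huinvN, hsub, Complex.cos, hexpN, hexpNneg]
    rw [hNdef, pow_succ, pow_succ, pow_succ]
    have hI : Complex.I ^ 2 = -1 := Complex.I_sq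
    have hAA : A⁻¹ * A ^ 2 = A := by rw [pow_two, ← mul_assoc, inv_mul_cancel₀ hA0, one_mul]
    linear_combination (-(Complex.I / 2) * -Complex.I * A⁻¹ * (A ^ 1 * A + 1)) * e5 +
      ((-1 : ℂ) ^ M * (A⁻¹ * A ^ 2 + A⁻¹) / 2) * hI + ((-1 : ℂ) ^ M * (-1 / 2)) * hAA
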